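/- Let n ≥ 1 and N = 2n. Let e₁,…,e_{2n} be the standard basis of ℂ^{2n}, U = span{e₁,…,e_n}, W = span{e_{n+1},…,e_{2n}}. Define the full flag V₀ = 0, V_i = span{e₁+e_{n+1},…,e_i+e_{n+i}} for 1 ≤ i ≤ n, and V_{n+i} = V_n + span{e₁,…,e_i} for 1 ≤ i ≤ n. Then the set H = {g ∈ GL(2n,ℂ) : det(g) = 1, g(U) = U, g(W) = W, and g(V_i) = V_i for all i = 0,…,2n} is not a connected subset of the space of 2n×2n complex matrices. (Consequently, the subgroup S(GL(n)×GL(n)) ⊂ SL(2n) is not parabolically connected.) -/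

import Mathlib

/-- The coordinate subspace `U = span{e₁,…,eₙ}` of `ℂ^{2n}`. -/
noncomputable def stdU' (n : ℕ) : Submodule ℂ (Fin (n + n) → ℂ) :=
  Submodule.span ℂ (Set.range fun i : Fin n => (Pi.single (Fin.castAdd n i) 1 : Fin (n + n) → ℂ))

/-- The coordinate subspace `W = span{e_{n+1},…,e_{2n}}` of `ℂ^{2n}`. -/
noncomputable def stdW' (n : ℕ) : Submodule ℂ (Fin (n + n) → ℂ) :=
  Submodule.span ℂ (Set.range fun i : Fin n => (Pi.single (Fin.natAdd n i) 1 : Fin (n + n) → ℂ))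

/-- The full flag `V_j = span{e₁+e_{n+1},…,e_j+e_{n+j}}` for `j ≤ n` and
`V_{n+j} = V_n + span{e₁,…,e_j}` for `1 ≤ j ≤ n`. -/
noncomputable def badFlag (n : ℕ) (j : Fin (n + n + 1)) : Submodule ℂ (Fin (n + n) → ℂ) :=
  Submodule.span ℂ
    (((fun i : Fin n => (Pi.single (Fin.castAdd n i) 1 : Fin (n + n) → ℂ) +
        Pi.single (Fin.natAdd n i) 1) '' {i : Fin n | (i : ℕ) < (j : ℕ)}) ∪
     ((fun i : Fin n => (Pi.single (Fin.castAdd n i) 1 : Fin (n + n) → ℂ)) ''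
        {i : Fin n | (i : ℕ) + n < (j : ℕ)}))

open Matrix

/-- A linear map that rescales each generator fixes the span. -/
lemma aux_map_span_of_smul {M : Type*} [AddCommGroup M] [Module ℂ M]
    (f : M →ₗ[ℂ] M) (s : Set M)
    (h : ∀ x ∈ s, ∃ c : ℂ, c ≠ 0 ∧ f x = c • x) :
    (Submodule.span ℂ s).map f = Submodule.span ℂ s := by
  rw [Submodule.map_span]
  apply le_antisymm
  · rw [Submodule.span_le]
    rintro _ ⟨x, hx, rfl⟩
    obtain ⟨c, _, hfx⟩ := h x hx
    rw [hfx]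
    exact Submodule.smul_mem _ _ (Submodule.subset_span hx)
  · rw [Submodule.span_le]
    intro x hx
    obtain ⟨c, hc, hfx⟩ := h x hx
    have hx' : x = c⁻¹ • f x := by rw [hfx, smul_smul, inv_mul_cancel₀ hc, one_smul]
    rw [hx']
    exact Submodule.smul_mem _ _ (Submodule.subset_span ⟨x, hx, rfl⟩)

/-- The determinant of the upper-left `n × n` block. -/
noncomputable def phiDet (n : ℕ) (g : Matrix (Fin (n + n)) (Fin (n + n)) ℂ) : ℂ :=
  (g.submatrix (Fin.castAdd n) (Fin.castAdd n)).det

lemma phiDet_continuous (n : ℕ) : Continuous (phiDet n) :=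
  (continuous_id.matrix_submatrix _ _).matrix_det

lemma mem_stdU'_apply (n : ℕ) {v : Fin (n + n) → ℂ} (hv : v ∈ stdU' n) (i : Fin n) :
    v (Fin.natAdd n i) = 0 := by
  have hle : stdU' n ≤ LinearMap.ker (LinearMap.proj (Fin.natAdd n i) :
      (Fin (n + n) → ℂ) →ₗ[ℂ] ℂ) := by
    rw [stdU', Submodule.span_le]
    rintro _ ⟨k, rfl⟩
    have hne : Fin.natAdd n i ≠ Fin.castAdd n k := by
      simp only [ne_eq, Fin.ext_iff, Fin.coe_natAdd, Fin.coe_castAdd]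
      omega
    rw [SetLike.mem_coe, LinearMap.mem_ker]
    exact Pi.single_eq_of_ne hne 1
  exact hle hv

lemma mem_stdW'_apply (n : ℕ) {v : Fin (n + n) → ℂ} (hv : v ∈ stdW' n) (i : Fin n) :
    v (Fin.castAdd n i) = 0 := by
  have hle : stdW' n ≤ LinearMap.ker (LinearMap.proj (Fin.castAdd n i) :
      (Fin (n + n) → ℂ) →ₗ[ℂ] ℂ) := by
    rw [stdW', Submodule.span_le]
    rintro _ ⟨k, rfl⟩
    have hne : Fin.castAdd n i ≠ Fin.natAdd n k := by
      simp only [ne_eq, Fin.ext_iff, Fin.coe_natAdd, Fin.coe_castAdd]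
      omega
    rw [SetLike.mem_coe, LinearMap.mem_ker]
    exact Pi.single_eq_of_ne hne 1
  exact hle hv

lemma phiDet_pm (n : ℕ) (g : Matrix (Fin (n + n)) (Fin (n + n)) ℂ)
    (hdet : g.det = 1)
    (hU : (stdU' n).map (Matrix.toLin' g) = stdU' n)
    (hW : (stdW' n).map (Matrix.toLin' g) = stdW' n)
    (hF : ∀ j : Fin (n + n + 1), (badFlag n j).map (Matrix.toLin' g) = badFlag n j) :
    phiDet n g = 1 ∨ phiDet n g = -1 := by
  -- lower-left block vanishes
  have hC0 : ∀ i j : Fin n, g (Fin.natAdd n i) (Fin.castAdd n j) = 0 := by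
    intro i j
    have hmem : Matrix.toLin' g (Pi.single (Fin.castAdd n j) 1) ∈ stdU' n := by
      rw [← hU]
      exact Submodule.mem_map_of_mem (Submodule.subset_span ⟨j, rfl⟩)
    have h2 := mem_stdU'_apply n hmem i
    rw [Matrix.toLin'_apply, Matrix.mulVec_single] at h2
    simpa using h2
  have hB0 : ∀ i j : Fin n, g (Fin.castAdd n i) (Fin.natAdd n j) = 0 := by
    intro i j
    have hmem : Matrix.toLin' g (Pi.single (Fin.natAdd n j) 1) ∈ stdW' n := by
      rw [← hW]
      exact Submodule.mem_map_of_mem (Submodule.subset_span ⟨j, rfl⟩)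
    have h2 := mem_stdW'_apply n hmem i
    rw [Matrix.toLin'_apply, Matrix.mulVec_single] at h2
    simpa using h2
  -- diagonal blocks coincide
  have hAD : ∀ i j : Fin n, g (Fin.castAdd n i) (Fin.castAdd n j) =
      g (Fin.natAdd n i) (Fin.natAdd n j) := by
    intro i j
    have hjn : ((j : ℕ) + 1) < n + n + 1 := by omega
    set jn : Fin (n + n + 1) := ⟨(j : ℕ) + 1, hjn⟩ with hjndef
    have hflag : ∀ v ∈ badFlag n jn, v (Fin.castAdd n i) = v (Fin.natAdd n i) := by
      intro v hv
      have hle : badFlag n jn ≤ LinearMap.ker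
          ((LinearMap.proj (Fin.castAdd n i) : (Fin (n + n) → ℂ) →ₗ[ℂ] ℂ) -
            LinearMap.proj (Fin.natAdd n i)) := by
        rw [badFlag, Submodule.span_le]
        rintro x (⟨k, hk, rfl⟩ | ⟨k, hk, rfl⟩)
        · rw [SetLike.mem_coe, LinearMap.mem_ker]
          simp only [LinearMap.sub_apply, LinearMap.proj_apply, Pi.add_apply, sub_eq_zero]
          have e1 : Fin.castAdd n i ≠ Fin.natAdd n k := by
            simp only [ne_eq, Fin.ext_iff, Fin.coe_natAdd, Fin.coe_castAdd]; omega
          have e2 : Fin.natAdd n i ≠ Fin.castAdd n k := by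
            simp only [ne_eq, Fin.ext_iff, Fin.coe_natAdd, Fin.coe_castAdd]; omega
          rw [Pi.single_eq_of_ne e1, Pi.single_eq_of_ne e2]
          by_cases hik : i = k
          · subst hik; simp
          · have e3 : Fin.castAdd n i ≠ Fin.castAdd n k := by
              simp only [ne_eq, Fin.ext_iff, Fin.coe_castAdd]
              exact fun h => hik (Fin.ext h)
            have e4 : Fin.natAdd n i ≠ Fin.natAdd n k := by
              simp only [ne_eq, Fin.ext_iff, Fin.coe_natAdd]
              intro h; exact hik (Fin.ext (by omega))
            rw [Pi.single_eq_of_ne e3, Pi.single_eq_of_ne e4]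
        · exfalso
          have hk' : (k : ℕ) + n < (jn : ℕ) := hk
          have hjv : (jn : ℕ) = (j : ℕ) + 1 := rfl
          have := j.isLt
          omega
      have h2 := hle hv
      rw [LinearMap.mem_ker] at h2
      simpa [sub_eq_zero] using h2
    have hjlt : (j : ℕ) < (jn : ℕ) := Nat.lt_succ_self _
    have hmemgen : (Pi.single (Fin.castAdd n j) 1 + Pi.single (Fin.natAdd n j) 1 :
        Fin (n + n) → ℂ) ∈ badFlag n jn :=
      Submodule.subset_span (Or.inl ⟨j, hjlt, rfl⟩)
    have hmem : Matrix.toLin' g (Pi.single (Fin.castAdd n j) 1 +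
        Pi.single (Fin.natAdd n j) 1) ∈ badFlag n jn := by
      rw [← hF jn]
      exact Submodule.mem_map_of_mem hmemgen
    have heq := hflag _ hmem
    rw [Matrix.toLin'_apply, Matrix.mulVec_add] at heq
    simp only [Matrix.mulVec_single, mul_one, Pi.add_apply, MulOpposite.op_one, one_smul, Matrix.col_apply] at heq
    rw [hB0 i j, hC0 i j, add_zero, zero_add] at heq
    exact heq
  -- block determinant
  have hDA : g.submatrix (Fin.natAdd n) (Fin.natAdd n) =
      g.submatrix (Fin.castAdd n) (Fin.castAdd n) := by
    ext i j
    exact (hAD i j).symm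
  have hsub : g.submatrix (finSumFinEquiv : Fin n ⊕ Fin n ≃ Fin (n + n)) finSumFinEquiv =
      Matrix.fromBlocks (g.submatrix (Fin.castAdd n) (Fin.castAdd n)) 0 0
        (g.submatrix (Fin.natAdd n) (Fin.natAdd n)) := by
    ext i j
    cases i <;> cases j <;>
        simp only [Matrix.submatrix_apply, finSumFinEquiv_apply_left,
          finSumFinEquiv_apply_right, Matrix.fromBlocks_apply₁₁, Matrix.fromBlocks_apply₁₂,
          Matrix.fromBlocks_apply₂₁, Matrix.fromBlocks_apply₂₂, Matrix.zero_apply] <;>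
      first
        | rfl
        | exact hB0 _ _
        | exact hC0 _ _
  have h1 : (1 : ℂ) = phiDet n g * phiDet n g := by
    calc (1 : ℂ) = g.det := hdet.symm
    _ = (g.submatrix (finSumFinEquiv : Fin n ⊕ Fin n ≃ Fin (n + n)) finSumFinEquiv).det :=
        (Matrix.det_submatrix_equiv_self _ _).symm
    _ = phiDet n g * phiDet n g := by
        rw [hsub, hDA, Matrix.det_fromBlocks_zero₂₁]; rfl
  exact mul_self_eq_one_iff.mp h1.symm

theorem sglgl_equal_not_parabolically_connected (n : ℕ) (hn : 1 ≤ n) :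
    ¬ IsConnected {g : Matrix (Fin (n + n)) (Fin (n + n)) ℂ |
        g.det = 1 ∧
        (stdU' n).map (Matrix.toLin' g) = stdU' n ∧
        (stdW' n).map (Matrix.toLin' g) = stdW' n ∧
        ∀ j : Fin (n + n + 1), (badFlag n j).map (Matrix.toLin' g) = badFlag n j} := by
  intro hC
  set S : Set (Matrix (Fin (n + n)) (Fin (n + n)) ℂ) :=
    {g | g.det = 1 ∧
        (stdU' n).map (Matrix.toLin' g) = stdU' n ∧
        (stdW' n).map (Matrix.toLin' g) = stdW' n ∧
        ∀ j : Fin (n + n + 1), (badFlag n j).map (Matrix.toLin' g) = badFlag n j} with hSdef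
  -- identity is in S, with phiDet = 1
  have hid : (1 : Matrix (Fin (n + n)) (Fin (n + n)) ℂ) ∈ S := by
    refine ⟨Matrix.det_one, ?_, ?_, fun j => ?_⟩ <;>
      simp [Matrix.toLin'_one, Submodule.map_id]
  have hphi1 : phiDet n 1 = 1 := by
    rw [phiDet, Matrix.submatrix_one _ (Fin.castAdd_injective _ _), Matrix.det_one]
  -- the sign element
  have h0lt : 0 < n + n := by omega
  have hnlt : n < n + n := by omega
  set d : Fin (n + n) → ℂ := fun i =>
    (if i = ⟨0, h0lt⟩ then -1 else 1) * (if i = ⟨n, hnlt⟩ then -1 else 1) with hddef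
  set g₂ : Matrix (Fin (n + n)) (Fin (n + n)) ℂ := Matrix.diagonal d with hg2def
  have hdca : ∀ i : Fin n, d (Fin.castAdd n i) = if (i : ℕ) = 0 then -1 else 1 := by
    intro i
    have h2 : Fin.castAdd n i ≠ ⟨n, hnlt⟩ := by
      simp only [ne_eq, Fin.ext_iff, Fin.coe_castAdd]
      have := i.isLt; omega
    have h1 : (Fin.castAdd n i = ⟨0, h0lt⟩) ↔ ((i : ℕ) = 0) := by
      rw [Fin.ext_iff]; simp
    show ((if Fin.castAdd n i = ⟨0, h0lt⟩ then (-1 : ℂ) else 1) *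
        (if Fin.castAdd n i = ⟨n, hnlt⟩ then -1 else 1)) = _
    rw [if_neg h2, mul_one]
    by_cases h : (i : ℕ) = 0
    · rw [if_pos (h1.mpr h), if_pos h]
    · rw [if_neg (fun hh => h (h1.mp hh)), if_neg h]
  have hdna : ∀ i : Fin n, d (Fin.natAdd n i) = if (i : ℕ) = 0 then -1 else 1 := by
    intro i
    have h2 : Fin.natAdd n i ≠ ⟨0, h0lt⟩ := by
      simp only [ne_eq, Fin.ext_iff, Fin.coe_natAdd]
      omega
    have h1 : (Fin.natAdd n i = ⟨n, hnlt⟩) ↔ ((i : ℕ) = 0) := by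
      rw [Fin.ext_iff]; simp
    show ((if Fin.natAdd n i = ⟨0, h0lt⟩ then (-1 : ℂ) else 1) *
        (if Fin.natAdd n i = ⟨n, hnlt⟩ then -1 else 1)) = _
    rw [if_neg h2, one_mul]
    by_cases h : (i : ℕ) = 0
    · rw [if_pos (h1.mpr h), if_pos h]
    · rw [if_neg (fun hh => h (h1.mp hh)), if_neg h]
  have hdne : ∀ i : Fin (n + n), d i ≠ 0 := by
    intro i
    show ((if i = ⟨0, h0lt⟩ then (-1 : ℂ) else 1) * (if i = ⟨n, hnlt⟩ then -1 else 1)) ≠ 0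
    split_ifs <;> norm_num
  have hg2single : ∀ j : Fin (n + n),
      Matrix.toLin' g₂ (Pi.single j 1 : Fin (n + n) → ℂ) =
        d j • (Pi.single j 1 : Fin (n + n) → ℂ) := by
    intro j
    rw [Matrix.toLin'_apply, hg2def, Matrix.diagonal_mulVec_single, mul_one]
    ext r
    rw [Pi.smul_apply, Pi.single_apply, Pi.single_apply]
    split_ifs with h
    · subst h; simp
    · simp
  have hg2mem : g₂ ∈ S := by
    refine ⟨?_, ?_, ?_, fun j => ?_⟩
    · rw [hg2def, Matrix.det_diagonal]
      simp only [hddef]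
      rw [Finset.prod_mul_distrib, Fintype.prod_ite_eq', Fintype.prod_ite_eq']
      norm_num
    · apply aux_map_span_of_smul
      rintro _ ⟨i, rfl⟩
      exact ⟨d (Fin.castAdd n i), hdne _, hg2single _⟩
    · apply aux_map_span_of_smul
      rintro _ ⟨i, rfl⟩
      exact ⟨d (Fin.natAdd n i), hdne _, hg2single _⟩
    · apply aux_map_span_of_smul
      rintro x (⟨i, hi, rfl⟩ | ⟨i, hi, rfl⟩)
      · refine ⟨d (Fin.castAdd n i), hdne _, ?_⟩
        rw [map_add, hg2single, hg2single, hdca, hdna, smul_add]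
      · exact ⟨d (Fin.castAdd n i), hdne _, hg2single _⟩
  have hphi2 : phiDet n g₂ = -1 := by
    rw [phiDet, hg2def, Matrix.submatrix_diagonal _ _ (Fin.castAdd_injective _ _),
      Matrix.det_diagonal]
    have hcongr : ∀ i : Fin n, (d ∘ Fin.castAdd n) i =
        if i = (⟨0, hn⟩ : Fin n) then -1 else 1 := by
      intro i
      rw [Function.comp_apply, hdca]
      by_cases h : (i : ℕ) = 0
      · rw [if_pos h, if_pos (Fin.ext h)]
      · rw [if_neg h, if_neg (fun hh => h (congrArg Fin.val hh))]
    rw [Finset.prod_congr rfl fun i _ => hcongr i, Fintype.prod_ite_eq']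
  -- topological contradiction
  have himg : IsPreconnected (phiDet n '' S) :=
    hC.isPreconnected.image _ (phiDet_continuous n).continuousOn
  have hu : IsOpen {z : ℂ | 0 < z.re} := isOpen_lt continuous_const Complex.continuous_re
  have hv : IsOpen {z : ℂ | z.re < 0} := isOpen_lt Complex.continuous_re continuous_const
  have hdisj : Disjoint {z : ℂ | 0 < z.re} {z : ℂ | z.re < 0} := by
    rw [Set.disjoint_left]
    intro z hz hz'
    simp only [Set.mem_setOf_eq] at hz hz'
    exact absurd (lt_trans hz hz') (lt_irrefl _)
  have hsuv : phiDet n '' S ⊆ {z : ℂ | 0 < z.re} ∪ {z : ℂ | z.re < 0} := by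
    rintro _ ⟨g, hg, rfl⟩
    rcases phiDet_pm n g hg.1 hg.2.1 hg.2.2.1 hg.2.2.2 with h | h
    · left; rw [h]; norm_num
    · right; rw [h]; norm_num
  rcases himg.subset_or_subset hu hv hdisj hsuv with h | h
  · have h2 := h ⟨g₂, hg2mem, hphi2⟩
    norm_num at h2
  · have h2 := h ⟨1, hid, hphi1⟩
    norm_num at h2
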